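/- Let W be a finite Weyl group, Γ a subset of the simple roots with parabolic subgroup W_Γ, and β ∈ Φ⁺_Γ. Then |{w ∈ W : w(β) ∈ Φ⁻}| / |W| = |{w ∈ W_Γ : w(β) ∈ Φ⁻}| / |W_Γ|. -/

import Mathlib

open scoped Classical

noncomputable section

/-- A finite, reduced, crystallographic root system spanning `ℝⁿ`,
together with a choice of positive system. -/
structure CrystRootSystem (n : ℕ) where
  /-- the finite set of roots -/
  roots : Finset (EuclideanSpace ℝ (Fin n))
  nonzero : ∀ β ∈ roots, β ≠ 0
  neg_mem : ∀ β ∈ roots, -β ∈ roots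
  spanning : Submodule.span ℝ (roots : Set (EuclideanSpace ℝ (Fin n))) = ⊤
  reflect_mem : ∀ α ∈ roots, ∀ β ∈ roots,
    β - (2 * (inner ℝ α β : ℝ) / (inner ℝ α α : ℝ)) • α ∈ roots
  cryst : ∀ α ∈ roots, ∀ β ∈ roots, ∃ k : ℤ,
    2 * (inner ℝ α β : ℝ) / (inner ℝ α α : ℝ) = (k : ℝ)
  reduced : ∀ α ∈ roots, ∀ c : ℝ, c • α ∈ roots → c = 1 ∨ c = -1
  /-- the positive roots -/
  pos : Finset (EuclideanSpace ℝ (Fin n))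
  pos_def : ∃ f : EuclideanSpace ℝ (Fin n) →ₗ[ℝ] ℝ, (∀ β ∈ roots, f β ≠ 0) ∧
    ∀ β, β ∈ pos ↔ β ∈ roots ∧ 0 < f β

variable {n : ℕ}

/-- `w` is the orthogonal reflection in the root `β`. -/
def IsReflectionIn (β : EuclideanSpace ℝ (Fin n))
    (w : EuclideanSpace ℝ (Fin n) ≃ₗᵢ[ℝ] EuclideanSpace ℝ (Fin n)) : Prop :=
  ∀ v, w v = v - (2 * (inner ℝ β v : ℝ) / (inner ℝ β β : ℝ)) • β

/-- The Weyl group, generated by the reflections in the roots. -/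
def CrystRootSystem.weyl (R : CrystRootSystem n) :
    Subgroup (EuclideanSpace ℝ (Fin n) ≃ₗᵢ[ℝ] EuclideanSpace ℝ (Fin n)) :=
  Subgroup.closure {w | ∃ β ∈ R.roots, IsReflectionIn β w}

/-- The simple roots: indecomposable positive roots. -/
def CrystRootSystem.simples (R : CrystRootSystem n) : Finset (EuclideanSpace ℝ (Fin n)) :=
  R.pos.filter fun β => ¬ ∃ γ ∈ R.pos, ∃ δ ∈ R.pos, β = γ + δ

/-- The parabolic subgroup generated by the reflections in the roots of `Γ`. -/
def parabolicSubgroup (Γ : Finset (EuclideanSpace ℝ (Fin n))) :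
    Subgroup (EuclideanSpace ℝ (Fin n) ≃ₗᵢ[ℝ] EuclideanSpace ℝ (Fin n)) :=
  Subgroup.closure {w | ∃ α ∈ Γ, IsReflectionIn α w}

section Aux

variable {n : ℕ}

local notation "E" => EuclideanSpace ℝ (Fin n)

/-- The reflection in `β`, as a linear isometry equivalence. -/
def sref (β : E) : E ≃ₗᵢ[ℝ] E := Submodule.reflection (ℝ ∙ β)ᗮ

lemma sref_apply (β v : E) :
    sref β v = v - (2 * (inner ℝ β v : ℝ) / (inner ℝ β β : ℝ)) • β := by
  rw [sref, Submodule.reflection_orthogonal_apply, Submodule.reflection_singleton_apply]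
  rw [real_inner_self_eq_norm_sq]
  rw [two_smul]
  simp only [RCLike.ofReal_real_eq_id, id_eq]
  have : ((inner ℝ β v : ℝ) / ‖β‖ ^ 2) • β + ((inner ℝ β v : ℝ) / ‖β‖ ^ 2) • β
      = (2 * (inner ℝ β v : ℝ) / ‖β‖ ^ 2) • β := by
    rw [← add_smul]; congr 1; ring
  rw [neg_sub, this]

lemma isReflectionIn_sref (β : E) : IsReflectionIn β (sref β) :=
  fun v => sref_apply β v

lemma sref_sref (β v : E) : sref β (sref β v) = v := Submodule.reflection_reflection _ v

lemma sref_mul_self (β : E) : sref β * sref β = 1 := by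
  refine LinearIsometryEquiv.ext fun v => ?_
  exact sref_sref β v

lemma sref_inv (β : E) : (sref β)⁻¹ = sref β :=
  inv_eq_of_mul_eq_one_right (sref_mul_self β)

lemma sref_apply_self (β : E) : sref β β = -β :=
  Submodule.reflection_orthogonalComplement_singleton_eq_neg β

lemma IsReflectionIn.eq_sref {β : E} {w : E ≃ₗᵢ[ℝ] E} (h : IsReflectionIn β w) :
    w = sref β := by
  refine LinearIsometryEquiv.ext fun u => ?_
  rw [h u, sref_apply]

lemma sref_conj (w : E ≃ₗᵢ[ℝ] E) (β : E) : sref (w β) = w * sref β * w⁻¹ := by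
  refine LinearIsometryEquiv.ext fun v => ?_
  have h1 : (inner ℝ (w β) v : ℝ) = inner ℝ β (w.symm v) := by
    conv_lhs => rw [← w.apply_symm_apply v]
    exact w.inner_map_map β (w.symm v)
  have h2 : (inner ℝ (w β) (w β) : ℝ) = inner ℝ β β := w.inner_map_map β β
  show sref (w β) v = w (sref β (w.symm v))
  rw [sref_apply, sref_apply, h1, h2, map_sub, map_smul, w.apply_symm_apply]

lemma pos_subset_roots (R : CrystRootSystem n) : R.pos ⊆ R.roots := by
  obtain ⟨f, hf0, hfpos⟩ := R.pos_def
  exact fun x hx => ((hfpos x).1 hx).1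

lemma simples_subset_pos (R : CrystRootSystem n) : R.simples ⊆ R.pos :=
  Finset.filter_subset _ _

lemma root_inner_self_pos (R : CrystRootSystem n) {β : E} (hβ : β ∈ R.roots) :
    0 < (inner ℝ β β : ℝ) := by
  have h0 : 0 < ‖β‖ := norm_pos_iff.2 (R.nonzero β hβ)
  rw [real_inner_self_eq_norm_sq]
  positivity

lemma weyl_maps_roots' (R : CrystRootSystem n) {w : E ≃ₗᵢ[ℝ] E} (hw : w ∈ R.weyl) :
    ∀ γ ∈ R.roots, w γ ∈ R.roots ∧ w⁻¹ γ ∈ R.roots := by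
  induction hw using Subgroup.closure_induction with
  | mem x hx =>
    obtain ⟨δ, hδ, hrefl⟩ := hx
    have hx2 : x = sref δ := hrefl.eq_sref
    subst hx2
    intro γ hγ
    refine ⟨?_, ?_⟩
    · rw [sref_apply]; exact R.reflect_mem δ hδ γ hγ
    · rw [sref_inv, sref_apply]; exact R.reflect_mem δ hδ γ hγ
  | one => intro γ hγ; constructor <;> simpa using hγ
  | mul x y hx hy ihx ihy =>
    intro γ hγ
    refine ⟨(ihx (y γ) (ihy γ hγ).1).1, ?_⟩
    rw [mul_inv_rev]
    exact (ihy (x⁻¹ γ) (ihx γ hγ).2).2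
  | inv x hx ihx =>
    intro γ hγ
    refine ⟨(ihx γ hγ).2, ?_⟩
    rw [inv_inv]
    exact (ihx γ hγ).1

lemma weyl_maps_roots (R : CrystRootSystem n) {w : E ≃ₗᵢ[ℝ] E} (hw : w ∈ R.weyl)
    {γ : E} (hγ : γ ∈ R.roots) : w γ ∈ R.roots :=
  (weyl_maps_roots' R hw γ hγ).1

lemma parabolic_le_weyl (R : CrystRootSystem n) {Γ : Finset E} (hΓ : Γ ⊆ R.simples) :
    parabolicSubgroup Γ ≤ R.weyl := by
  apply Subgroup.closure_mono
  rintro w ⟨α, hα, h⟩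
  exact ⟨α, pos_subset_roots R (simples_subset_pos R (hΓ hα)), h⟩

lemma weyl_finite (R : CrystRootSystem n) : Finite R.weyl := by
  have hmem : ∀ w : R.weyl, ∀ γ : {x // x ∈ R.roots}, w.1 γ.1 ∈ R.roots :=
    fun w γ => weyl_maps_roots R w.2 γ.2
  apply Finite.of_injective
    (fun w : R.weyl => fun γ : {x // x ∈ R.roots} => Subtype.mk (w.1 γ.1) (hmem w γ))
  intro w₁ w₂ h
  have h' : ∀ γ ∈ R.roots, w₁.1 γ = w₂.1 γ :=
    fun γ hγ => congrArg Subtype.val (congrFun h (Subtype.mk γ hγ))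
  apply Subtype.ext
  refine LinearIsometryEquiv.ext fun v => ?_
  have hv : v ∈ Submodule.span ℝ (R.roots : Set E) := by rw [R.spanning]; trivial
  induction hv using Submodule.span_induction with
  | mem x hx => exact h' x hx
  | zero => simp
  | add x y _ _ hx hy => rw [map_add, map_add, hx, hy]
  | smul a x _ hx => rw [map_smul, map_smul, hx]

end Aux

section Aux2

variable {n : ℕ}

local notation "E" => EuclideanSpace ℝ (Fin n)

variable {R : CrystRootSystem n} {f : EuclideanSpace ℝ (Fin n) →ₗ[ℝ] ℝ}

lemma neg_mem_pos_iff (hf0 : ∀ β ∈ R.roots, f β ≠ 0)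
    (hfpos : ∀ β, β ∈ R.pos ↔ β ∈ R.roots ∧ 0 < f β)
    {γ : E} (hγ : γ ∈ R.roots) : -γ ∈ R.pos ↔ γ ∉ R.pos := by
  simp only [hfpos, map_neg]
  constructor
  · rintro ⟨-, hneg⟩ ⟨-, hpos⟩; linarith
  · intro h
    refine ⟨R.neg_mem γ hγ, ?_⟩
    rcases (hf0 γ hγ).lt_or_gt with h' | h'
    · linarith
    · exact absurd ⟨hγ, h'⟩ h

lemma simple_comb {β : E} (hβ : β ∈ R.simples) :
    ∃ c : E → ℝ, (∀ x, 0 ≤ c x) ∧ β = ∑ x ∈ R.simples, c x • x := by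
  refine ⟨fun x => if x = β then 1 else 0, fun x => by dsimp only; split <;> norm_num, ?_⟩
  have : ∀ x ∈ R.simples, (if x = β then (1:ℝ) else 0) • x = if x = β then x else 0 := by
    intro x _; split <;> simp
  rw [Finset.sum_congr rfl this, Finset.sum_ite_eq' R.simples β (fun x => x), if_pos hβ]

lemma pos_comb (hfpos : ∀ β, β ∈ R.pos ↔ β ∈ R.roots ∧ 0 < f β) :
    ∀ N : ℕ, ∀ β ∈ R.pos, (R.pos.filter fun γ => f γ < f β).card ≤ N →
    ∃ c : E → ℝ, (∀ x, 0 ≤ c x) ∧ β = ∑ x ∈ R.simples, c x • x := by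
  intro N
  induction N with
  | zero =>
    intro β hβ hcard
    by_cases hs : β ∈ R.simples
    · exact simple_comb hs
    · exfalso
      have hdec : ∃ γ ∈ R.pos, ∃ δ ∈ R.pos, β = γ + δ := by
        by_contra h; exact hs (Finset.mem_filter.2 ⟨hβ, h⟩)
      obtain ⟨γ, hγ, δ, hδ, rfl⟩ := hdec
      have hγf : f γ < f (γ + δ) := by
        have := ((hfpos δ).1 hδ).2; rw [map_add]; linarith
      have hmem : γ ∈ R.pos.filter fun γ' => f γ' < f (γ + δ) :=
        Finset.mem_filter.2 ⟨hγ, hγf⟩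
      have := Finset.card_pos.2 ⟨γ, hmem⟩
      omega
  | succ N ih =>
    intro β hβ hcard
    by_cases hs : β ∈ R.simples
    · exact simple_comb hs
    · have hdec : ∃ γ ∈ R.pos, ∃ δ ∈ R.pos, β = γ + δ := by
        by_contra h; exact hs (Finset.mem_filter.2 ⟨hβ, h⟩)
      obtain ⟨γ, hγ, δ, hδ, rfl⟩ := hdec
      have key : ∀ ρ ∈ R.pos, f ρ < f (γ + δ) →
          (R.pos.filter fun x => f x < f ρ).card ≤ N := by
        intro ρ hρ hfρ
        have hsub : (R.pos.filter fun x => f x < f ρ) ⊆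
            (R.pos.filter fun x => f x < f (γ + δ)).erase ρ := by
          intro x hx
          obtain ⟨hx1, hx2⟩ := Finset.mem_filter.1 hx
          rw [Finset.mem_erase]
          exact ⟨by rintro rfl; exact lt_irrefl _ hx2,
            Finset.mem_filter.2 ⟨hx1, hx2.trans hfρ⟩⟩
        have h1 := Finset.card_le_card hsub
        have hρmem : ρ ∈ R.pos.filter fun x => f x < f (γ + δ) :=
          Finset.mem_filter.2 ⟨hρ, hfρ⟩
        rw [Finset.card_erase_of_mem hρmem] at h1
        omega
      have hfγ : f γ < f (γ + δ) := by
        have := ((hfpos δ).1 hδ).2; rw [map_add]; linarith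
      have hfδ : f δ < f (γ + δ) := by
        have := ((hfpos γ).1 hγ).2; rw [map_add]; linarith
      obtain ⟨c1, hc1, hrep1⟩ := ih γ hγ (key γ hγ hfγ)
      obtain ⟨c2, hc2, hrep2⟩ := ih δ hδ (key δ hδ hfδ)
      refine ⟨fun x => c1 x + c2 x, fun x => add_nonneg (hc1 x) (hc2 x), ?_⟩
      rw [hrep1, hrep2, ← Finset.sum_add_distrib]
      exact Finset.sum_congr rfl fun x _ => (add_smul _ _ _).symm

lemma cs_strict {α β : E} (hα : α ≠ 0) (h : ¬ ∃ r : ℝ, β = r • α) :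
    (inner ℝ α β : ℝ) * inner ℝ α β < (inner ℝ α α : ℝ) * inner ℝ β β := by
  rcases (real_inner_mul_inner_self_le α β).lt_or_eq with h' | h'
  · exact h'
  · exfalso
    have hβ : β ≠ 0 := by rintro rfl; exact h ⟨0, by simp⟩
    rw [real_inner_self_eq_norm_mul_norm, real_inner_self_eq_norm_mul_norm] at h'
    have h1 : |(inner ℝ α β : ℝ)| = ‖α‖ * ‖β‖ := by
      rcases mul_self_eq_mul_self_iff.1
        (show (inner ℝ α β : ℝ) * inner ℝ α β = (‖α‖ * ‖β‖) * (‖α‖ * ‖β‖) by rw [h']; ring)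
        with h2 | h2
      · rw [h2]; exact abs_of_nonneg (by positivity)
      · rw [h2, abs_neg]; exact abs_of_nonneg (by positivity)
    have hn : ‖α‖ * ‖β‖ ≠ 0 := by
      have h0α : 0 < ‖α‖ := norm_pos_iff.2 hα
      have h0β : 0 < ‖β‖ := norm_pos_iff.2 hβ
      positivity
    have h2 : |(inner ℝ α β : ℝ) / (‖α‖ * ‖β‖)| = 1 := by
      rw [abs_div, h1, abs_of_nonneg (by positivity : (0:ℝ) ≤ ‖α‖ * ‖β‖), div_self hn]
    obtain ⟨-, r, -, hr⟩ := (abs_real_inner_div_norm_mul_norm_eq_one_iff α β).1 h2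
    exact h ⟨r, hr⟩

lemma obtuse (hf0 : ∀ β ∈ R.roots, f β ≠ 0)
    (hfpos : ∀ β, β ∈ R.pos ↔ β ∈ R.roots ∧ 0 < f β)
    {α β : E} (hα : α ∈ R.simples) (hβ : β ∈ R.simples) (hne : α ≠ β) :
    (inner ℝ α β : ℝ) ≤ 0 := by
  by_contra hpos
  push_neg at hpos
  have hαp : α ∈ R.pos := simples_subset_pos R hα
  have hβp : β ∈ R.pos := simples_subset_pos R hβ
  have hαr : α ∈ R.roots := pos_subset_roots R hαp
  have hβr : β ∈ R.roots := pos_subset_roots R hβp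
  have hnp : ¬ ∃ r : ℝ, β = r • α := by
    rintro ⟨r, rfl⟩
    rcases R.reduced α hαr r hβr with rfl | rfl
    · rw [one_smul] at hne; exact hne rfl
    · have h1 := ((hfpos α).1 hαp).2
      have h2 := ((hfpos ((-1 : ℝ) • α)).1 hβp).2
      rw [map_smul] at h2
      simp only [smul_eq_mul, neg_one_mul] at h2
      linarith
  obtain ⟨k, hk⟩ := R.cryst α hαr β hβr
  obtain ⟨m, hm⟩ := R.cryst β hβr α hαr
  have haa := root_inner_self_pos R hαr
  have hbb := root_inner_self_pos R hβr
  have hc : (inner ℝ β α : ℝ) = inner ℝ α β := real_inner_comm α β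
  have hkpos : (0:ℝ) < k := by rw [← hk]; exact div_pos (by linarith) haa
  have hmpos : (0:ℝ) < m := by
    rw [← hm, hc]; exact div_pos (by linarith) hbb
  have hcs := cs_strict (R.nonzero α hαr) hnp
  have hkm : (k : ℝ) * m < 4 := by
    rw [← hk, ← hm, hc, div_mul_div_comm, div_lt_iff₀ (mul_pos haa hbb)]
    nlinarith
  have hk1 : k = 1 ∨ m = 1 := by
    have hk1' : 1 ≤ k := by exact_mod_cast hkpos
    have hm1' : 1 ≤ m := by exact_mod_cast hmpos
    have : (k : ℝ) * m = ((k * m : ℤ) : ℝ) := by push_cast; ring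
    rw [this] at hkm
    have : k * m < 4 := by exact_mod_cast hkm
    by_contra hcon
    push_neg at hcon
    obtain ⟨hka, hma⟩ := hcon
    have : 2 ≤ k := by omega
    have : 2 ≤ m := by omega
    nlinarith
  have hdiff : β - α ∈ R.roots := by
    rcases hk1 with h1 | h1
    · have h2 := R.reflect_mem α hαr β hβr
      rw [hk, h1] at h2
      simpa using h2
    · have h2 := R.reflect_mem β hβr α hαr
      rw [hm, h1] at h2
      have h3 := R.neg_mem _ h2
      simp only [Int.cast_one, one_smul, neg_sub] at h3
      exact h3
  rcases em ((β - α) ∈ R.pos) with h | h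
  · exact (Finset.mem_filter.1 hβ).2 ⟨β - α, h, α, hαp, by abel⟩
  · have h' : α - β ∈ R.pos := by
      have := (neg_mem_pos_iff hf0 hfpos hdiff).2 h
      rwa [neg_sub] at this
    exact (Finset.mem_filter.1 hα).2 ⟨α - β, h', β, hβp, by abel⟩

lemma simples_sum_zero (hf0 : ∀ β ∈ R.roots, f β ≠ 0)
    (hfpos : ∀ β, β ∈ R.pos ↔ β ∈ R.roots ∧ 0 < f β)
    (g : EuclideanSpace ℝ (Fin n) → ℝ)
    (hg : ∑ x ∈ R.simples, g x • x = 0) : ∀ x ∈ R.simples, g x = 0 := by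
  have main : ∀ h : E → ℝ, ∑ x ∈ R.simples, h x • x = 0 →
      ∀ x₀ ∈ R.simples, ¬ 0 < h x₀ := by
    intro h hsum x₀ hx₀ hx₀pos
    have hsplit : ∑ x ∈ R.simples.filter (fun x => 0 < h x), h x • x
        = - ∑ x ∈ R.simples.filter (fun x => ¬ 0 < h x), h x • x := by
      rw [eq_neg_iff_add_eq_zero, Finset.sum_filter_add_sum_filter_not]
      exact hsum
    have hnn : (0:ℝ) ≤ inner ℝ (∑ x ∈ R.simples.filter (fun x => 0 < h x), h x • x)
        (∑ x ∈ R.simples.filter (fun x => ¬ 0 < h x), h x • x) := by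
      rw [sum_inner]
      apply Finset.sum_nonneg
      intro x hx
      rw [real_inner_smul_left, inner_sum]
      have hxP := Finset.mem_filter.1 hx
      apply mul_nonneg (le_of_lt hxP.2)
      apply Finset.sum_nonneg
      intro y hy
      have hyP := Finset.mem_filter.1 hy
      rw [real_inner_smul_right]
      have hxy : x ≠ y := by rintro rfl; exact hyP.2 hxP.2
      have hob : (inner ℝ x y : ℝ) ≤ 0 := obtuse hf0 hfpos hxP.1 hyP.1 hxy
      have hyn : h y ≤ 0 := not_lt.1 hyP.2
      nlinarith
    have hinner : (inner ℝ (∑ x ∈ R.simples.filter (fun x => 0 < h x), h x • x)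
        (∑ x ∈ R.simples.filter (fun x => 0 < h x), h x • x) : ℝ) ≤ 0 := by
      nth_rewrite 2 [hsplit]
      rw [inner_neg_right]
      linarith
    have hu0 : ∑ x ∈ R.simples.filter (fun x => 0 < h x), h x • x = 0 := by
      rwa [real_inner_self_nonpos] at hinner
    have hfv : f (∑ x ∈ R.simples.filter (fun x => 0 < h x), h x • x)
        = ∑ x ∈ R.simples.filter (fun x => 0 < h x), h x * f x := by
      rw [map_sum]
      exact Finset.sum_congr rfl fun x _ => by rw [map_smul, smul_eq_mul]
    rw [hu0, map_zero] at hfv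
    have hsumpos : 0 < ∑ x ∈ R.simples.filter (fun x => 0 < h x), h x * f x := by
      apply Finset.sum_pos
      · intro x hx
        have hxP := Finset.mem_filter.1 hx
        have hfx : 0 < f x := ((hfpos x).1 (simples_subset_pos R hxP.1)).2
        exact mul_pos hxP.2 hfx
      · exact ⟨x₀, Finset.mem_filter.2 ⟨hx₀, hx₀pos⟩⟩
    linarith
  intro x hx
  have h1 := main g hg x hx
  have h2 := main (fun y => -g y) (by
    simp only [neg_smul]
    rw [Finset.sum_neg_distrib, hg, neg_zero]) x hx
  simp only [not_lt, Left.nonneg_neg_iff] at h1 h2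
  linarith

lemma span_comb (hf0 : ∀ β ∈ R.roots, f β ≠ 0)
    (hfpos : ∀ β, β ∈ R.pos ↔ β ∈ R.roots ∧ 0 < f β)
    {Γ : Finset (EuclideanSpace ℝ (Fin n))} (hΓ : Γ ⊆ R.simples) {β : E} (hβ : β ∈ R.pos)
    (hspan : β ∈ Submodule.span ℝ (Γ : Set (EuclideanSpace ℝ (Fin n)))) :
    ∃ c : E → ℝ, (∀ x, 0 ≤ c x) ∧ (∀ x ∈ R.simples, x ∉ Γ → c x = 0) ∧
      β = ∑ x ∈ Γ, c x • x ∧ β = ∑ x ∈ R.simples, c x • x := by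
  obtain ⟨c, hc0, hrep⟩ := pos_comb hfpos _ β hβ le_rfl
  obtain ⟨d, -, hd⟩ := Submodule.mem_span_finset.1 hspan
  have hΓsum : ∀ e : E → ℝ, ∑ x ∈ Γ, e x • x
      = ∑ x ∈ R.simples, (if x ∈ Γ then e x else 0) • x := by
    intro e
    rw [← Finset.sum_subset hΓ (fun x _ hx => by rw [if_neg hx, zero_smul])]
    exact Finset.sum_congr rfl fun x hx => by rw [if_pos hx]
  have hzero : ∀ x ∈ R.simples, c x - (if x ∈ Γ then d x else 0) = 0 := by
    apply simples_sum_zero hf0 hfpos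
    have : ∑ x ∈ R.simples, (c x - if x ∈ Γ then d x else 0) • x
        = ∑ x ∈ R.simples, c x • x - ∑ x ∈ R.simples, (if x ∈ Γ then d x else 0) • x := by
      rw [← Finset.sum_sub_distrib]
      exact Finset.sum_congr rfl fun x _ => sub_smul _ _ _
    rw [this, ← hΓsum d, hd, ← hrep, sub_self]
  have hout : ∀ x ∈ R.simples, x ∉ Γ → c x = 0 := by
    intro x hx hxΓ
    have := hzero x hx
    rwa [if_neg hxΓ, sub_zero] at this
  refine ⟨c, hc0, hout, ?_, hrep⟩
  rw [hrep]
  exact (Finset.sum_subset hΓ fun x hx hxΓ => by rw [hout x hx hxΓ, zero_smul]).symm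

end Aux2

section Aux3

variable {n : ℕ}

local notation "E" => EuclideanSpace ℝ (Fin n)

variable {R : CrystRootSystem n} {f : EuclideanSpace ℝ (Fin n) →ₗ[ℝ] ℝ}

lemma sref_mem_parabolic (hf0 : ∀ β ∈ R.roots, f β ≠ 0)
    (hfpos : ∀ β, β ∈ R.pos ↔ β ∈ R.roots ∧ 0 < f β)
    {Γ : Finset (EuclideanSpace ℝ (Fin n))} (hΓ : Γ ⊆ R.simples) :
    ∀ N : ℕ, ∀ β : E, β ∈ R.pos →
      β ∈ Submodule.span ℝ (Γ : Set (EuclideanSpace ℝ (Fin n))) →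
      (R.pos.filter fun γ => f γ < f β).card = N → sref β ∈ parabolicSubgroup Γ := by
  intro N
  induction N using Nat.strong_induction_on with
  | _ N ih =>
  intro β hβ hspan hcard
  have hβr : β ∈ R.roots := pos_subset_roots R hβ
  obtain ⟨c, hc0, hcsupp, hrepΓ, hrepS⟩ := span_comb hf0 hfpos hΓ hβ hspan
  have hββ : 0 < (inner ℝ β β : ℝ) := root_inner_self_pos R hβr
  have hsum : ∑ x ∈ Γ, c x * (inner ℝ x β : ℝ) = (inner ℝ β β : ℝ) := by
    have h1 : (inner ℝ β β : ℝ) = inner ℝ (∑ x ∈ Γ, c x • x) β := by rw [← hrepΓ]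
    rw [h1, sum_inner]
    exact Finset.sum_congr rfl fun x _ => (real_inner_smul_left _ _ _).symm
  have hex : ∃ α ∈ Γ, 0 < c α * (inner ℝ α β : ℝ) := by
    by_contra h
    push_neg at h
    have : ∑ x ∈ Γ, c x * (inner ℝ x β : ℝ) ≤ 0 := Finset.sum_nonpos h
    linarith
  obtain ⟨α, hαΓ, hα⟩ := hex
  have hαs : α ∈ R.simples := hΓ hαΓ
  have hαp : α ∈ R.pos := simples_subset_pos R hαs
  have hαr : α ∈ R.roots := pos_subset_roots R hαp
  have haa : 0 < (inner ℝ α α : ℝ) := root_inner_self_pos R hαr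
  have hip : 0 < (inner ℝ α β : ℝ) := by
    by_contra h
    push_neg at h
    nlinarith [hc0 α]
  by_cases hprop : ∃ r : ℝ, β = r • α
  · obtain ⟨r, rfl⟩ := hprop
    rcases R.reduced α hαr r hβr with rfl | rfl
    · rw [one_smul]
      exact Subgroup.subset_closure ⟨α, hαΓ, isReflectionIn_sref α⟩
    · exfalso
      have h1 := ((hfpos α).1 hαp).2
      have h2 := ((hfpos ((-1 : ℝ) • α)).1 hβ).2
      rw [map_smul] at h2
      simp only [smul_eq_mul, neg_one_mul] at h2
      linarith
  · have hfα : 0 < f α := ((hfpos α).1 hαp).2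
    have hk : 0 < 2 * (inner ℝ α β : ℝ) / inner ℝ α α := div_pos (by linarith) haa
    have hβ'root : β - (2 * (inner ℝ α β : ℝ) / inner ℝ α α) • α ∈ R.roots :=
      R.reflect_mem α hαr β hβr
    have hβ'span : β - (2 * (inner ℝ α β : ℝ) / inner ℝ α α) • α
        ∈ Submodule.span ℝ (Γ : Set (EuclideanSpace ℝ (Fin n))) :=
      Submodule.sub_mem _ hspan (Submodule.smul_mem _ _ (Submodule.subset_span hαΓ))
    have hβ'pos : β - (2 * (inner ℝ α β : ℝ) / inner ℝ α α) • α ∈ R.pos := by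
      by_contra h
      have hneg : -(β - (2 * (inner ℝ α β : ℝ) / inner ℝ α α) • α) ∈ R.pos :=
        (neg_mem_pos_iff hf0 hfpos hβ'root).2 h
      obtain ⟨c', hc'0, hrep'⟩ := pos_comb hfpos _ _ hneg le_rfl
      have he : -(β - (2 * (inner ℝ α β : ℝ) / inner ℝ α α) • α)
          = ∑ x ∈ R.simples,
            ((if x = α then 2 * (inner ℝ α β : ℝ) / inner ℝ α α else 0) - c x) • x := by
        have hsum1 : ∑ x ∈ R.simples,
            (if x = α then 2 * (inner ℝ α β : ℝ) / inner ℝ α α else 0) • x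
            = (2 * (inner ℝ α β : ℝ) / inner ℝ α α) • α := by
          have : ∀ x ∈ R.simples, (if x = α then 2 * (inner ℝ α β : ℝ) / inner ℝ α α else 0) • x
              = if x = α then (2 * (inner ℝ α β : ℝ) / inner ℝ α α) • x else 0 := by
            intro x _; split <;> simp
          rw [Finset.sum_congr rfl this,
            Finset.sum_ite_eq' R.simples α (fun x => (2 * (inner ℝ α β : ℝ) / inner ℝ α α) • x),
            if_pos hαs]
        have hsplit : ∑ x ∈ R.simples,
            ((if x = α then 2 * (inner ℝ α β : ℝ) / inner ℝ α α else 0) - c x) • x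
            = ∑ x ∈ R.simples,
              (if x = α then 2 * (inner ℝ α β : ℝ) / inner ℝ α α else 0) • x
              - ∑ x ∈ R.simples, c x • x := by
          rw [← Finset.sum_sub_distrib]
          exact Finset.sum_congr rfl fun x _ => sub_smul _ _ _
        rw [hsplit, hsum1, ← hrepS]
        abel
      have heq := simples_sum_zero hf0 hfpos
        (fun x => c' x - ((if x = α then 2 * (inner ℝ α β : ℝ) / inner ℝ α α else 0) - c x))
        (by
          have hsplit : ∑ x ∈ R.simples,
              (c' x - ((if x = α then 2 * (inner ℝ α β : ℝ) / inner ℝ α α else 0) - c x)) • x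
              = ∑ x ∈ R.simples, c' x • x - ∑ x ∈ R.simples,
                ((if x = α then 2 * (inner ℝ α β : ℝ) / inner ℝ α α else 0) - c x) • x := by
            rw [← Finset.sum_sub_distrib]
            exact Finset.sum_congr rfl fun x _ => sub_smul _ _ _
          rw [hsplit, ← hrep', ← he, sub_self])
      have hcx : ∀ x ∈ Γ, x ≠ α → c x = 0 := by
        intro x hx hxa
        have hxs := hΓ hx
        have h3 := heq x hxs
        rw [if_neg hxa] at h3
        simp only [zero_sub, sub_neg_eq_add] at h3
        have h4 := hc'0 x
        have h5 := hc0 x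
        linarith
      apply hprop
      refine ⟨c α, ?_⟩
      rw [hrepΓ]
      rw [Finset.sum_eq_single α (fun x hx hxa => by rw [hcx x hx hxa, zero_smul])
        (fun h' => absurd hαΓ h')]
    have hflt : f (β - (2 * (inner ℝ α β : ℝ) / inner ℝ α α) • α) < f β := by
      rw [map_sub, map_smul, smul_eq_mul]
      nlinarith
    have hcard' : (R.pos.filter fun γ =>
        f γ < f (β - (2 * (inner ℝ α β : ℝ) / inner ℝ α α) • α)).card < N := by
      rw [← hcard]
      apply Finset.card_lt_card
      constructor
      · intro x hx
        obtain ⟨hx1, hx2⟩ := Finset.mem_filter.1 hx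
        exact Finset.mem_filter.2 ⟨hx1, hx2.trans hflt⟩
      · intro hsub
        have hmem : β - (2 * (inner ℝ α β : ℝ) / inner ℝ α α) • α
            ∈ R.pos.filter fun γ => f γ < f β := Finset.mem_filter.2 ⟨hβ'pos, hflt⟩
        have := (Finset.mem_filter.1 (hsub hmem)).2
        exact lt_irrefl _ this
    have hkey := ih _ hcard' _ hβ'pos hβ'span rfl
    have h1 : sref α (β - (2 * (inner ℝ α β : ℝ) / inner ℝ α α) • α) = β := by
      have h2 : β - (2 * (inner ℝ α β : ℝ) / inner ℝ α α) • α = sref α β :=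
        (sref_apply α β).symm
      rw [h2, sref_sref]
    have hconj : sref β = sref α * sref (β - (2 * (inner ℝ α β : ℝ) / inner ℝ α α) • α)
        * (sref α)⁻¹ := by
      have h2 := sref_conj (sref α) (β - (2 * (inner ℝ α β : ℝ) / inner ℝ α α) • α)
      rwa [h1] at h2
    rw [hconj]
    have hsα : sref α ∈ parabolicSubgroup Γ :=
      Subgroup.subset_closure ⟨α, hαΓ, isReflectionIn_sref α⟩
    exact mul_mem (mul_mem hsα hkey) (inv_mem hsα)

lemma half_card (R : CrystRootSystem n) {f : EuclideanSpace ℝ (Fin n) →ₗ[ℝ] ℝ}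
    (hf0 : ∀ β ∈ R.roots, f β ≠ 0)
    (hfpos : ∀ β, β ∈ R.pos ↔ β ∈ R.roots ∧ 0 < f β)
    (H : Subgroup (EuclideanSpace ℝ (Fin n) ≃ₗᵢ[ℝ] EuclideanSpace ℝ (Fin n)))
    (hfin : Finite H) (hH : ∀ w ∈ H, ∀ γ ∈ R.roots, w γ ∈ R.roots)
    {β : E} (hβ : β ∈ R.pos) (hs : sref β ∈ H) :
    (Nat.card {w : H // -(w.1 β) ∈ R.pos} : ℚ) / (Nat.card H : ℚ) = 1 / 2 := by
  haveI := hfin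
  have hβr : β ∈ R.roots := pos_subset_roots R hβ
  have hroot : ∀ w : H, w.1 β ∈ R.roots := fun w => hH w.1 w.2 β hβr
  have hss : (⟨sref β, hs⟩ : H) * ⟨sref β, hs⟩ = 1 :=
    Subtype.ext (sref_mul_self β)
  have happ : ∀ w : H, (w * ⟨sref β, hs⟩).1 β = -(w.1 β) := by
    intro w
    show w.1 (sref β β) = _
    rw [sref_apply_self, map_neg]
  have e1 : {w : H // -(w.1 β) ∈ R.pos} ≃ {w : H // w.1 β ∈ R.pos} :=
  { toFun := fun w => ⟨w.1 * ⟨sref β, hs⟩, by rw [happ]; exact w.2⟩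
    invFun := fun w => ⟨w.1 * ⟨sref β, hs⟩, by rw [happ, neg_neg]; exact w.2⟩
    left_inv := fun w => Subtype.ext (by
      show w.1 * ⟨sref β, hs⟩ * ⟨sref β, hs⟩ = w.1
      rw [mul_assoc, hss, mul_one])
    right_inv := fun w => Subtype.ext (by
      show w.1 * ⟨sref β, hs⟩ * ⟨sref β, hs⟩ = w.1
      rw [mul_assoc, hss, mul_one]) }
  have e2 : {w : H // ¬ (-(w.1 β) ∈ R.pos)} ≃ {w : H // w.1 β ∈ R.pos} :=
    Equiv.subtypeEquivRight fun w => by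
      rw [neg_mem_pos_iff hf0 hfpos (hroot w)]; exact not_not
  have hsumcard : Nat.card H = Nat.card {w : H // -(w.1 β) ∈ R.pos}
      + Nat.card {w : H // ¬ (-(w.1 β) ∈ R.pos)} := by
    rw [← Nat.card_sum]
    exact Nat.card_congr (Equiv.sumCompl _).symm
  have h2 : Nat.card {w : H // ¬ (-(w.1 β) ∈ R.pos)}
      = Nat.card {w : H // -(w.1 β) ∈ R.pos} := by
    rw [Nat.card_congr e2, ← Nat.card_congr e1]
  have hne : Nonempty {w : H // -(w.1 β) ∈ R.pos} :=
    ⟨⟨⟨sref β, hs⟩, by show -(sref β β) ∈ R.pos; rw [sref_apply_self, neg_neg]; exact hβ⟩⟩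
  have hpos : 0 < Nat.card {w : H // -(w.1 β) ∈ R.pos} := Nat.card_pos
  rw [hsumcard, h2]
  have hq : ((Nat.card {w : H // -(w.1 β) ∈ R.pos} : ℚ)) ≠ 0 := by
    exact_mod_cast hpos.ne'
  push_cast
  field_simp
  ring

end Aux3

/-- For `Γ` a set of simple roots and `β` a positive root in the span of `Γ`,
the proportion of elements of the Weyl group sending `β` to a negative root
equals the corresponding proportion within the parabolic subgroup `W_Γ`. -/
theorem parabolic_proportion (R : CrystRootSystem n)
    (Γ : Finset (EuclideanSpace ℝ (Fin n))) (hΓ : Γ ⊆ R.simples)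
    (β : EuclideanSpace ℝ (Fin n)) (hβ : β ∈ R.pos)
    (hspan : β ∈ Submodule.span ℝ (Γ : Set (EuclideanSpace ℝ (Fin n)))) :
    (Nat.card {w : R.weyl // -(w.1 β) ∈ R.pos} : ℚ) / (Nat.card R.weyl : ℚ) =
      (Nat.card {w : parabolicSubgroup Γ // -(w.1 β) ∈ R.pos} : ℚ) /
        (Nat.card (parabolicSubgroup Γ) : ℚ) := by
  obtain ⟨f, hf0, hfpos⟩ := R.pos_def
  have hβr : β ∈ R.roots := pos_subset_roots R hβ
  have hWfin : Finite R.weyl := weyl_finite R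
  have hPle : parabolicSubgroup Γ ≤ R.weyl := parabolic_le_weyl R hΓ
  have hPfin : Finite (parabolicSubgroup Γ) :=
    Finite.of_injective (fun w : parabolicSubgroup Γ => (Subtype.mk w.1 (hPle w.2) : R.weyl))
      (fun a b h => by
        apply Subtype.ext
        have := congrArg Subtype.val h
        simpa using this)
  rw [half_card R hf0 hfpos R.weyl hWfin (fun w hw γ hγ => weyl_maps_roots R hw hγ) hβ
      (Subgroup.subset_closure ⟨β, hβr, isReflectionIn_sref β⟩),
    half_card R hf0 hfpos (parabolicSubgroup Γ) hPfin
      (fun w hw γ hγ => weyl_maps_roots R (hPle hw) hγ) hβ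
      (sref_mem_parabolic hf0 hfpos hΓ _ β hβ hspan rfl)]

end
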